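/- Let J be a positive half-integer and L ≥ 2. For a configuration m : {-L,…,L} → {-J,…,J}, define E(m) = Σ_{α=-L}^{L-1} (J+m_α)(J-m_{α+1}). Then E(m) = 0 if and only if there exists x ∈ {-L,…,L} such that m_α = -J for all α < x and m_α = J for all α > x. -/

import Mathlib

/-- `J` is a positive half-integer: `J ∈ (1/2)ℕ`, `J > 0`. -/
def IsHalfInt (J : ℝ) : Prop := ∃ k : ℕ, 0 < k ∧ J = k / 2

/-- `m` is an allowed spin value for spin `J`: `m ∈ {-J, -J+1, …, J}`. -/
def IsSpinVal (J m : ℝ) : Prop := |m| ≤ J ∧ ∃ k : ℤ, m = -J + k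

/-- `E(m) = 0` iff `m` is a kink ground state configuration:
there is `x ∈ [-L,L]` with `m_α = -J` for `α < x` and `m_α = J` for `α > x`. -/
theorem stmt3 (J : ℝ) (hJ : IsHalfInt J) (L : ℤ) (hL : 2 ≤ L) (m : ℤ → ℝ)
    (hm : ∀ α ∈ Finset.Icc (-L) L, IsSpinVal J (m α)) :
    (∑ α ∈ Finset.Icc (-L) (L - 1), (J + m α) * (J - m (α + 1))) = 0 ↔
      ∃ x ∈ Finset.Icc (-L) L,
        (∀ α ∈ Finset.Icc (-L) L, α < x → m α = -J) ∧
        (∀ α ∈ Finset.Icc (-L) L, x < α → m α = J) := by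
  obtain ⟨k, hk, hJk⟩ := hJ
  have hJpos : 0 < J := by
    have : (1:ℝ) ≤ k := by exact_mod_cast hk
    rw [hJk]; linarith
  have hnonneg : ∀ α ∈ Finset.Icc (-L) (L-1), 0 ≤ (J + m α) * (J - m (α+1)) := by
    intro α hα
    rw [Finset.mem_Icc] at hα
    have h1 := hm α (by rw [Finset.mem_Icc]; omega)
    have h2 := hm (α+1) (by rw [Finset.mem_Icc]; omega)
    have hb1 := abs_le.mp h1.1
    have hb2 := abs_le.mp h2.1
    have : 0 ≤ J + m α := by linarith [hb1.1]
    have : 0 ≤ J - m (α+1) := by linarith [hb2.2]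
    positivity
  constructor
  · intro hsum
    have hzero := (Finset.sum_eq_zero_iff_of_nonneg hnonneg).mp hsum
    have hdisj : ∀ α : ℤ, -L ≤ α → α ≤ L - 1 → m α = -J ∨ m (α+1) = J := by
      intro α h1 h2
      have := hzero α (by rw [Finset.mem_Icc]; omega)
      rcases mul_eq_zero.mp this with h | h
      · left; linarith
      · right; linarith
    set s := (Finset.Icc (-L) L).filter (fun α => m α ≠ -J) with hs_def
    by_cases hne : s.Nonempty
    · set x := s.min' hne with hx
      have hxmem : x ∈ s := s.min'_mem hne
      have hxIcc : x ∈ Finset.Icc (-L) L := (Finset.mem_filter.mp hxmem).1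
      have hxne : m x ≠ -J := (Finset.mem_filter.mp hxmem).2
      have hxL := Finset.mem_Icc.mp hxIcc
      refine ⟨x, hxIcc, ?_, ?_⟩
      · intro α hα hαx
        by_contra h
        have hmem : α ∈ s := Finset.mem_filter.mpr ⟨hα, h⟩
        have := s.min'_le α hmem
        omega
      · have key : ∀ n : ℕ, x + 1 + (n:ℤ) ≤ L → m (x + 1 + (n:ℤ)) = J := by
          intro n
          induction n with
          | zero =>
            intro h
            rcases hdisj x hxL.1 (by push_cast at h; omega) with h' | h'
            · exact absurd h' hxne
            · simpa using h'
          | succ n ih =>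
            intro h
            have hle : x + 1 + (n:ℤ) ≤ L := by push_cast at h ⊢; omega
            have hprev : m (x+1+(n:ℤ)) = J := ih (by omega)
            have hne' : m (x+1+(n:ℤ)) ≠ -J := by rw [hprev]; intro hh; linarith
            rcases hdisj (x+1+(n:ℤ)) (by omega) (by push_cast at h; omega) with h' | h'
            · exact absurd h' hne'
            · have : x + 1 + ((n:ℤ)+1) = x + 1 + (n:ℤ) + 1 := by ring
              rw [show ((n+1:ℕ):ℤ) = (n:ℤ)+1 by push_cast; ring, this]
              exact h'
        intro α hα hxα
        have hαL := Finset.mem_Icc.mp hα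
        obtain ⟨n, hn⟩ : ∃ n : ℕ, α = x + 1 + (n:ℤ) := ⟨(α - x - 1).toNat, by omega⟩
        rw [hn]; exact key n (by omega)
    · refine ⟨L, by rw [Finset.mem_Icc]; omega, ?_, ?_⟩
      · intro α hα _
        by_contra h
        exact hne ⟨α, Finset.mem_filter.mpr ⟨hα, h⟩⟩
      · intro α hα hLα
        have := Finset.mem_Icc.mp hα
        omega
  · rintro ⟨x, hx, h1, h2⟩
    apply Finset.sum_eq_zero
    intro α hα
    have hαm := Finset.mem_Icc.mp hα
    rcases lt_or_ge α x with h | h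
    · rw [h1 α (Finset.mem_Icc.mpr ⟨hαm.1, by omega⟩) h]; ring
    · rw [h2 (α+1) (Finset.mem_Icc.mpr ⟨by omega, by omega⟩) (by omega)]; ring
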